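/- Let Z be a topological space, Y a subset of a Euclidean space, and k, k′ > 0 integers. Suppose p : T_k → Z is a topological embedding and q : T_k → Y^{k′} is a continuous map such that for every t ∈ T_k ∖ S_k the k′ points q(t)₁, …, q(t)_{k′} are affinely independent and their convex hull is contained in Y, while for every t ∈ S_k one has q(t) = (y_t, …, y_t) for some y_t ∈ Y. Then there exists a topological embedding f : Δ_{k+k′−1} → Z × Y such that for every t ∈ T_k and every x ∈ D_{t,k′}, the first coordinate of f(x) equals p(t), and the image of D_{t,k′} under the second coordinate of f equals the convex hull of the points q(t)₁, …, q(t)_{k′}. -/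

import Mathlib

/-- `T k = {r ∈ ℝ^k : Σᵢ rᵢ ≤ 1, rᵢ ≥ 0}`, a realization of the standard
`k`-dimensional simplex `Δ_k`. -/
def simplexT (k : ℕ) : Set (Fin k → ℝ) :=
  {r | (∀ i, 0 ≤ r i) ∧ ∑ i, r i ≤ 1}

/-- `S k = {r ∈ T k : Σᵢ rᵢ = 1}`, the face of `T k` where the coordinates sum
to one. -/
def simplexS (k : ℕ) : Set (Fin k → ℝ) :=
  {r | (∀ i, 0 ≤ r i) ∧ ∑ i, r i = 1}

open Finset Topology


lemma isCompact_simplexT (k : ℕ) : IsCompact (simplexT k) := by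
  have hclosed : IsClosed (simplexT k) := by
    have : simplexT k = (⋂ i, {r : Fin k → ℝ | 0 ≤ r i}) ∩ {r | ∑ i, r i ≤ 1} := by
      ext r; simp [simplexT]
    rw [this]
    exact (isClosed_iInter fun i => isClosed_le continuous_const (continuous_apply i)).inter
      (isClosed_le (by fun_prop) continuous_const)
  refine IsCompact.of_isClosed_subset (isCompact_Icc (a := (0 : Fin k → ℝ)) (b := 1)) hclosed ?_
  rintro r ⟨h0, h1⟩
  refine ⟨fun i => h0 i, fun i => ?_⟩
  calc r i ≤ ∑ j, r j := Finset.single_le_sum (fun j _ => h0 j) (mem_univ i)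
  _ ≤ 1 := h1

lemma convexHull_range_fin {E : Type*} [AddCommGroup E] [Module ℝ E] {n : ℕ} (v : Fin n → E) :
    convexHull ℝ (Set.range v) =
      {x | ∃ w : Fin n → ℝ, (∀ i, 0 ≤ w i) ∧ ∑ i, w i = 1 ∧ ∑ i, w i • v i = x} := by
  rw [convexHull_range_eq_exists_affineCombination]
  ext x
  constructor
  · rintro ⟨s, w, h0, h1, rfl⟩
    refine ⟨fun i => if i ∈ s then w i else 0, fun i => ?_, ?_, ?_⟩
    · dsimp only; split
      · exact h0 _ ‹_›
      · exact le_refl 0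
    · simp only; rw [Finset.sum_ite_mem, Finset.univ_inter, h1]
    · rw [affineCombination_eq_linear_combination s v w h1]
      simp only [ite_smul, zero_smul]
      rw [Finset.sum_ite_mem, Finset.univ_inter]
  · rintro ⟨w, h0, h1, rfl⟩
    exact ⟨Finset.univ, w, fun i _ => h0 i, h1,
      affineCombination_eq_linear_combination _ _ _ h1⟩

/-- **Embeddings of simplices into products (Lemma on nice embeddings).**
Given a topological space `Z`, a subset `Y` of a Euclidean space `ℝ^m`,
integers `k, k' > 0`, a topological embedding `p : T_k → Z` and a continuous
map `q : T_k → Y^{k'}` such that for `t ∈ T_k ∖ S_k` the points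
`q(t)₁, …, q(t)_{k'}` are affinely independent with convex hull inside `Y`,
while for `t ∈ S_k` all the `q(t)ⱼ` coincide in a single point of `Y`,
there is a topological embedding `f : Δ_{k+k'−1} → Z × Y` such that on each
slice `D_{t,k'} = {x ∈ Δ_{k+k'−1} : (x₁,…,x_k) = t}` the first coordinate of
`f` is constantly `p t` and the second coordinate maps `D_{t,k'}` onto the
convex hull of `q(t)₁, …, q(t)_{k'}`. -/
theorem exists_simplex_embedding_into_product
    {Z : Type*} [TopologicalSpace Z] {m : ℕ} (Y : Set (Fin m → ℝ))
    (k k' : ℕ) (hk : 0 < k) (hk' : 0 < k')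
    (p : (Fin k → ℝ) → Z)
    (hp : Topology.IsEmbedding ((simplexT k).restrict p))
    (q : (Fin k → ℝ) → Fin k' → (Fin m → ℝ))
    (hq_cont : ContinuousOn q (simplexT k))
    (hq_mem : ∀ t ∈ simplexT k, ∀ j, q t j ∈ Y)
    (hq_ind : ∀ t ∈ simplexT k \ simplexS k,
      AffineIndependent ℝ (q t) ∧ convexHull ℝ (Set.range (q t)) ⊆ Y)
    (hq_diag : ∀ t ∈ simplexS k, ∃ y ∈ Y, ∀ j, q t j = y) :
    ∃ f : (Fin (k + k' - 1) → ℝ) → Z × (Fin m → ℝ),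
      Topology.IsEmbedding ((simplexT (k + k' - 1)).restrict f) ∧
      (∀ x ∈ simplexT (k + k' - 1), (f x).2 ∈ Y) ∧
      ∀ t ∈ simplexT k,
        (∀ x ∈ simplexT (k + k' - 1),
          (∀ j : Fin k, x (Fin.castLE (by omega) j) = t j) → (f x).1 = p t) ∧
        (fun x => (f x).2) ''
            {x ∈ simplexT (k + k' - 1) |
              ∀ j : Fin k, x (Fin.castLE (by omega) j) = t j} =
          convexHull ℝ (Set.range (q t)) := by
  classical
  obtain ⟨K, rfl⟩ : ∃ K, k' = K + 1 := ⟨k' - 1, by omega⟩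
  -- projections
  set tp : (Fin (k + K) → ℝ) → (Fin k → ℝ) := fun x j => x (Fin.castAdd K j) with htp
  set sp : (Fin (k + K) → ℝ) → (Fin K → ℝ) := fun x i => x (Fin.natAdd k i) with hsp
  set σf : (Fin (k + K) → ℝ) → ℝ := fun x => ∑ j, tp x j with hσf
  set uf : (Fin (k + K) → ℝ) → Fin (K + 1) → ℝ := fun x j =>
    if h : (j : ℕ) < K then sp x ⟨j, h⟩ else 1 - ∑ i, x i with huf
  set g : (Fin (k + K) → ℝ) → (Fin m → ℝ) := fun x =>
    if σf x = 1 then q (tp x) 0 else ∑ j, ((1 - σf x)⁻¹ * uf x j) • q (tp x) j with hg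
  -- sum splitting
  have H1 : ∀ x : Fin (k + K) → ℝ, ∑ i, x i = σf x + ∑ i, sp x i := fun x =>
    Fin.sum_univ_add x
  have Hu : ∀ x : Fin (k + K) → ℝ, ∑ j, uf x j = 1 - σf x := by
    intro x
    rw [Fin.sum_univ_castSucc]
    have h1 : ∀ i : Fin K, uf x (Fin.castSucc i) = sp x i := by
      intro i
      simp only [huf]
      rw [dif_pos (show ((Fin.castSucc i : Fin (K+1)) : ℕ) < K from i.isLt)]
      exact congrArg (sp x) (Fin.ext rfl)
    have h2 : uf x (Fin.last K) = 1 - ∑ i, x i := by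
      simp only [huf]
      rw [dif_neg (by simp)]
    rw [h2, Finset.sum_congr rfl fun i _ => h1 i, H1 x]
    ring
  -- tp maps T into T
  have Htp : ∀ x ∈ simplexT (k + K), tp x ∈ simplexT k := by
    intro x hx
    refine ⟨fun j => hx.1 _, ?_⟩
    have := H1 x
    have hs : 0 ≤ ∑ i, sp x i := Finset.sum_nonneg fun i _ => hx.1 _
    have h2 := hx.2
    have hσx : σf x = ∑ j, tp x j := rfl
    linarith
  have Hu0 : ∀ x ∈ simplexT (k + K), ∀ j, 0 ≤ uf x j := by
    intro x hx j
    simp only [huf]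
    split
    · exact hx.1 _
    · linarith [hx.2]
    -- extension construction
  set ext : (Fin k → ℝ) → (Fin (K + 1) → ℝ) → (Fin (k + K) → ℝ) := fun t ω =>
    Fin.append t (fun i : Fin K => (1 - ∑ j, t j) * ω (Fin.castSucc i)) with hext
  have Hext_tp : ∀ t ω, tp (ext t ω) = t := by
    intro t ω; funext j; simp [hext, htp, Fin.append_left]
  have Hext_sp : ∀ t ω i, sp (ext t ω) i = (1 - ∑ j, t j) * ω (Fin.castSucc i) := by
    intro t ω i; simp [hext, hsp, Fin.append_right]
  have Hext_σ : ∀ t ω, σf (ext t ω) = ∑ j, t j := by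
    intro t ω; simp only [hσf, Hext_tp]
  have Hext_sum : ∀ (t : Fin k → ℝ) (ω : Fin (K+1) → ℝ), (∑ j, ω j = 1) →
      ∑ i, (ext t ω) i = (∑ j, t j) + (1 - ∑ j, t j) * (1 - ω (Fin.last K)) := by
    intro t ω hω
    rw [H1, Hext_σ]
    have : ∑ i, sp (ext t ω) i = (1 - ∑ j, t j) * ∑ i : Fin K, ω (Fin.castSucc i) := by
      rw [Finset.mul_sum]; exact Finset.sum_congr rfl fun i _ => Hext_sp t ω i
    rw [this]
    have : ∑ i : Fin K, ω (Fin.castSucc i) = 1 - ω (Fin.last K) := by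
      have := Fin.sum_univ_castSucc ω
      rw [hω] at this; linarith
    rw [this]
  have Hext_u : ∀ (t : Fin k → ℝ) (ω : Fin (K+1) → ℝ), (∑ j, ω j = 1) →
      ∀ j, uf (ext t ω) j = (1 - ∑ j, t j) * ω j := by
    intro t ω hω j
    rcases lt_or_ge (j : ℕ) K with h | h
    · simp only [huf]
      rw [dif_pos h, Hext_sp]
      have : Fin.castSucc ⟨(j:ℕ), h⟩ = j := Fin.ext rfl
      rw [this]
    · have hj : j = Fin.last K := Fin.ext (le_antisymm (Nat.lt_succ_iff.mp j.isLt) h)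
      subst hj
      simp only [huf]
      rw [dif_neg (by simp), Hext_sum t ω hω]
      ring
  have Hext_mem : ∀ t ∈ simplexT k, ∀ (ω : Fin (K+1) → ℝ), (∀ j, 0 ≤ ω j) → (∑ j, ω j = 1) →
      ext t ω ∈ simplexT (k + K) := by
    intro t ht ω hω0 hω1
    constructor
    · intro i
      refine Fin.addCases (fun j => ?_) (fun i => ?_) i
      · rw [show (ext t ω) (Fin.castAdd K j) = tp (ext t ω) j from rfl, Hext_tp]
        exact ht.1 j
      · rw [show (ext t ω) (Fin.natAdd k i) = sp (ext t ω) i from rfl, Hext_sp]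
        have h1 : (0:ℝ) ≤ 1 - ∑ j, t j := by linarith [ht.2]
        exact mul_nonneg h1 (hω0 _)
    · rw [Hext_sum t ω hω1]
      have h1 : (0:ℝ) ≤ 1 - ∑ j, t j := by linarith [ht.2]
      have h2 : (1 - ∑ j, t j) * (1 - ω (Fin.last K)) ≤ (1 - ∑ j, t j) * 1 :=
        mul_le_mul_of_nonneg_left (by linarith [hω0 (Fin.last K)]) h1
      linarith
  -- behaviour of g on a slice, non-degenerate case
  have Hg_formula : ∀ x ∈ simplexT (k + K), σf x ≠ 1 →
      (∀ j, 0 ≤ (1 - σf x)⁻¹ * uf x j) ∧ (∑ j, (1 - σf x)⁻¹ * uf x j = 1) ∧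
        g x = ∑ j, ((1 - σf x)⁻¹ * uf x j) • q (tp x) j := by
    intro x hx hσ
    have hσle : σf x ≤ 1 := by
      have := (Htp x hx).2
      simpa [hσf] using this
    have hσlt : σf x < 1 := lt_of_le_of_ne hσle hσ
    have hpos : 0 < 1 - σf x := by linarith
    refine ⟨fun j => mul_nonneg (inv_nonneg.mpr hpos.le) (Hu0 x hx j), ?_, ?_⟩
    · rw [← Finset.mul_sum, Hu, inv_mul_cancel₀ (by linarith)]
    · simp only [hg, if_neg hσ]
  -- degenerate case
  have Hg_diag : ∀ x ∈ simplexT (k + K), σf x = 1 →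
      (∀ i, sp x i = 0) ∧ g x = q (tp x) 0 ∧ tp x ∈ simplexS k := by
    intro x hx hσ
    have hsum : ∑ i, sp x i ≤ 0 := by
      have := H1 x; have := hx.2; linarith
    have hz : ∀ i, sp x i = 0 := by
      intro i
      have := Finset.sum_nonneg (fun i (_ : i ∈ Finset.univ) => hx.1 (Fin.natAdd k i))
      have heq : ∑ i, sp x i = 0 := le_antisymm hsum this
      have := (Finset.sum_eq_zero_iff_of_nonneg
        (fun i (_ : i ∈ Finset.univ) => hx.1 (Fin.natAdd k i))).mp heq
      exact this i (Finset.mem_univ i)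
    exact ⟨hz, by simp only [hg, if_pos hσ], ⟨(Htp x hx).1, hσ⟩⟩
    -- membership of g in the convex hull (non-degenerate)
  have Hg_hull : ∀ x ∈ simplexT (k + K), σf x ≠ 1 →
      g x ∈ convexHull ℝ (Set.range (q (tp x))) := by
    intro x hx hσ
    obtain ⟨h0, h1, h2⟩ := Hg_formula x hx hσ
    rw [convexHull_range_fin]
    exact ⟨_, h0, h1, h2.symm⟩
  -- σf on the slice
  have Hσt : ∀ (t : Fin k → ℝ) (x : Fin (k + K) → ℝ), tp x = t → σf x = ∑ j, t j := by
    intro t x h; simp only [hσf, h]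
  -- Y membership
  have HY : ∀ x ∈ simplexT (k + K), g x ∈ Y := by
    intro x hx
    by_cases hσ : σf x = 1
    · obtain ⟨-, hgx, hS⟩ := Hg_diag x hx hσ
      obtain ⟨y, hy, hqy⟩ := hq_diag _ hS
      rw [hgx, hqy]; exact hy
    · have hTS : tp x ∈ simplexT k \ simplexS k := by
        refine ⟨Htp x hx, fun hS => hσ ?_⟩
        exact hS.2
      exact (hq_ind _ hTS).2 (Hg_hull x hx hσ)
  -- image of a slice
  have Himg : ∀ t ∈ simplexT k,
      g '' {x ∈ simplexT (k + K) | tp x = t} = convexHull ℝ (Set.range (q t)) := by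
    intro t ht
    by_cases hσt : ∑ j, t j = 1
    · obtain ⟨y, hy, hqy⟩ := hq_diag t ⟨ht.1, hσt⟩
      have hrange : Set.range (q t) = {y} := by
        rw [show q t = fun _ => y from funext hqy]
        exact Set.range_const
      rw [hrange, convexHull_singleton]
      ext z
      constructor
      · rintro ⟨x, ⟨hxT, hxs⟩, rfl⟩
        have hσx : σf x = 1 := by rw [Hσt t x hxs]; exact hσt
        obtain ⟨-, hgx, -⟩ := Hg_diag x hxT hσx
        rw [hgx, hxs, hqy]
        rfl
      · rintro rfl
        set ω : Fin (K + 1) → ℝ := fun j => if j = 0 then 1 else 0 with hω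
        have hω0 : ∀ j, 0 ≤ ω j := by intro j; simp only [hω]; split <;> norm_num
        have hω1 : ∑ j, ω j = 1 := by simp [hω]
        refine ⟨ext t ω, ⟨Hext_mem t ht ω hω0 hω1, ?_⟩, ?_⟩
        · rw [Hext_tp]
        · have hσx : σf (ext t ω) = 1 := by rw [Hext_σ]; exact hσt
          obtain ⟨-, hgx, -⟩ := Hg_diag _ (Hext_mem t ht ω hω0 hω1) hσx
          rw [hgx, Hext_tp, hqy]
    · rw [convexHull_range_fin]
      ext z
      constructor
      · rintro ⟨x, ⟨hxT, hxs⟩, rfl⟩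
        have hσx : σf x ≠ 1 := by rw [Hσt t x hxs]; exact hσt
        obtain ⟨h0, h1, h2⟩ := Hg_formula x hxT hσx
        rw [hxs] at h2
        exact ⟨_, h0, h1, h2.symm⟩
      · rintro ⟨ω, hω0, hω1, rfl⟩
        have hmem := Hext_mem t ht ω hω0 hω1
        refine ⟨ext t ω, ⟨hmem, Hext_tp t ω⟩, ?_⟩
        have hσx : σf (ext t ω) ≠ 1 := by rw [Hext_σ]; exact hσt
        obtain ⟨h0, h1, h2⟩ := Hg_formula _ hmem hσx
        rw [h2, Hext_tp]
        refine Finset.sum_congr rfl fun j _ => ?_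
        rw [Hext_u t ω hω1 j, Hext_σ]
        have hne : (1 : ℝ) - ∑ j, t j ≠ 0 := fun h => hσt (by linarith)
        rw [← mul_assoc, inv_mul_cancel₀ hne, one_mul]
    -- continuity ingredients
  have htpc : Continuous tp := continuous_pi fun j => continuous_apply _
  have hσc : Continuous σf := continuous_finset_sum _ fun j _ => continuous_apply _
  have huc : ∀ j, Continuous fun x => uf x j := by
    intro j
    simp only [huf]
    rcases Nat.lt_or_ge (j : ℕ) K with h | h
    · simp only [dif_pos h]; exact continuous_apply _
    · simp only [dif_neg (Nat.not_lt.mpr h)]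
      exact continuous_const.sub (continuous_finset_sum _ fun i _ => continuous_apply _)
  have Hcq : ContinuousOn (fun x => q (tp x)) (simplexT (k + K)) :=
    hq_cont.comp htpc.continuousOn Htp
  have Hgc : ContinuousOn g (simplexT (k + K)) := by
    intro x₀ hx₀
    by_cases hσ : σf x₀ = 1
    · obtain ⟨-, hgx₀, hS⟩ := Hg_diag x₀ hx₀ hσ
      obtain ⟨y, hy, hqy⟩ := hq_diag _ hS
      have hqq : ContinuousWithinAt (fun x => q (tp x)) (simplexT (k + K)) x₀ := Hcq x₀ hx₀
      have hnorm : Filter.Tendsto (fun x => ∑ j, ‖q (tp x) j - y‖)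
          (nhdsWithin x₀ (simplexT (k + K))) (nhds 0) := by
        have h1 : Filter.Tendsto (fun x => ∑ j, ‖q (tp x) j - y‖)
            (nhdsWithin x₀ (simplexT (k + K))) (nhds (∑ j, ‖q (tp x₀) j - y‖)) :=
          tendsto_finset_sum _ fun j _ =>
            (((continuous_apply j).continuousAt.tendsto.comp hqq).sub tendsto_const_nhds).norm
        have h2 : ∑ j, ‖q (tp x₀) j - y‖ = 0 := by
          refine Finset.sum_eq_zero fun j _ => ?_
          rw [hqy j, sub_self, norm_zero]
        rwa [h2] at h1
      have hb : ∀ x ∈ simplexT (k + K), ‖g x - y‖ ≤ ∑ j, ‖q (tp x) j - y‖ := by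
        intro x hx
        by_cases hσx : σf x = 1
        · obtain ⟨-, hgx, -⟩ := Hg_diag x hx hσx
          rw [hgx]
          exact Finset.single_le_sum (f := fun j => ‖q (tp x) j - y‖)
            (fun j _ => norm_nonneg _) (Finset.mem_univ 0)
        · obtain ⟨h0, h1, h2⟩ := Hg_formula x hx hσx
          have hle1 : ∀ j, (1 - σf x)⁻¹ * uf x j ≤ 1 := by
            intro j
            calc (1 - σf x)⁻¹ * uf x j
                ≤ ∑ i, (1 - σf x)⁻¹ * uf x i :=
                  Finset.single_le_sum (fun i _ => h0 i) (Finset.mem_univ j)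
              _ = 1 := h1
          have hdiff : g x - y = ∑ j, ((1 - σf x)⁻¹ * uf x j) • (q (tp x) j - y) := by
            rw [h2]
            simp only [smul_sub]
            rw [Finset.sum_sub_distrib, ← Finset.sum_smul, h1, one_smul]
          rw [hdiff]
          calc ‖∑ j, ((1 - σf x)⁻¹ * uf x j) • (q (tp x) j - y)‖
              ≤ ∑ j, ‖((1 - σf x)⁻¹ * uf x j) • (q (tp x) j - y)‖ := norm_sum_le _ _
            _ ≤ ∑ j, ‖q (tp x) j - y‖ := by
                refine Finset.sum_le_sum fun j _ => ?_
                rw [norm_smul, Real.norm_eq_abs, abs_of_nonneg (h0 j)]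
                exact mul_le_of_le_one_left (norm_nonneg _) (hle1 j)
      have htend : Filter.Tendsto g (nhdsWithin x₀ (simplexT (k + K))) (nhds y) := by
        rw [tendsto_iff_norm_sub_tendsto_zero]
        refine squeeze_zero' ?_ ?_ hnorm
        · exact Filter.Eventually.of_forall fun x => norm_nonneg _
        · exact Filter.eventually_of_mem self_mem_nhdsWithin hb
      have : g x₀ = y := by rw [hgx₀, hqy 0]
      unfold ContinuousWithinAt
      rwa [this]
    · have hqq : ContinuousWithinAt (fun x => q (tp x)) (simplexT (k + K)) x₀ := Hcq x₀ hx₀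
      have hw : ContinuousWithinAt
          (fun x => ∑ j, ((1 - σf x)⁻¹ * uf x j) • q (tp x) j) (simplexT (k + K)) x₀ := by
        refine tendsto_finset_sum _ fun j _ => ?_
        have hsc : ContinuousWithinAt (fun x => (1 - σf x)⁻¹ * uf x j)
            (simplexT (k + K)) x₀ := by
          refine ContinuousWithinAt.mul ?_ (huc j).continuousWithinAt
          exact ((continuous_const.sub hσc).continuousWithinAt).inv₀ (sub_ne_zero.mpr
            (fun h => hσ h.symm))
        exact hsc.smul ((continuous_apply j).continuousAt.comp_continuousWithinAt hqq)
      have hev : ∀ᶠ x in nhdsWithin x₀ (simplexT (k + K)),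
          g x = ∑ j, ((1 - σf x)⁻¹ * uf x j) • q (tp x) j := by
        have hopen : IsOpen {x : Fin (k + K) → ℝ | σf x ≠ 1} :=
          (isClosed_eq hσc continuous_const).isOpen_compl
        filter_upwards [mem_nhdsWithin_of_mem_nhds (hopen.mem_nhds hσ)] with x hx
        simp only [hg, if_neg hx]
      refine ContinuousWithinAt.congr_of_eventuallyEq hw hev ?_
      simp only [hg, if_neg hσ]
  -- injectivity
  have Hxeq : ∀ x x' : Fin (k + K) → ℝ, tp x = tp x' → (∀ i, sp x i = sp x' i) → x = x' := by
    intro x x' h1 h2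
    funext i
    refine Fin.addCases (fun j => ?_) (fun i => ?_) i
    · exact congrFun h1 j
    · exact h2 i
  have Hinj : Set.InjOn (fun x => (p (tp x), g x)) (simplexT (k + K)) := by
    intro x hx x' hx' hf
    have h1 : p (tp x) = p (tp x') := congrArg Prod.fst hf
    have h2 : g x = g x' := congrArg Prod.snd hf
    have htpeq : tp x = tp x' := by
      have := hp.injective (a₁ := ⟨tp x, Htp x hx⟩) (a₂ := ⟨tp x', Htp x' hx'⟩) h1
      exact congrArg Subtype.val this
    have hσeq : σf x = σf x' := by simp only [hσf, htpeq]
    by_cases hσx : σf x = 1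
    · obtain ⟨hz, -, -⟩ := Hg_diag x hx hσx
      obtain ⟨hz', -, -⟩ := Hg_diag x' hx' (hσeq ▸ hσx)
      exact Hxeq x x' htpeq fun i => by rw [hz i, hz' i]
    · obtain ⟨h0, hs1, he⟩ := Hg_formula x hx hσx
      obtain ⟨h0', hs1', he'⟩ := Hg_formula x' hx' (hσeq ▸ hσx)
      have hTS : tp x ∈ simplexT k \ simplexS k := ⟨Htp x hx, fun hS => hσx hS.2⟩
      have haff := (hq_ind _ hTS).1
      have hweq : (fun j => (1 - σf x)⁻¹ * uf x j) = fun j => (1 - σf x')⁻¹ * uf x' j := by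
        refine (affineIndependent_iff_eq_of_fintype_affineCombination_eq ℝ (q (tp x))).mp
          haff _ _ hs1 hs1' ?_
        rw [affineCombination_eq_linear_combination _ _ _ hs1,
          affineCombination_eq_linear_combination _ _ _ hs1']
        rw [← he]
        rw [htpeq, ← he', h2]
      have hune : (1 : ℝ) - σf x ≠ 0 := sub_ne_zero.mpr fun h => hσx h.symm
      have hueq : ∀ j, uf x j = uf x' j := by
        intro j
        have h3 := congrFun hweq j
        rw [hσeq] at h3
        exact mul_left_cancel₀ (inv_ne_zero (by rwa [hσeq] at hune)) h3
      refine Hxeq x x' htpeq fun i => ?_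
      have h1 := hueq (Fin.castSucc i)
      simp only [huf, dif_pos (show ((Fin.castSucc i : Fin (K+1)) : ℕ) < K from i.isLt)] at h1
      have : (⟨((Fin.castSucc i : Fin (K+1)) : ℕ), i.isLt⟩ : Fin K) = i := Fin.ext rfl
      rwa [this] at h1
  -- embedding assembly
  haveI : CompactSpace (simplexT (k + K)) :=
    isCompact_iff_compactSpace.mp (isCompact_simplexT _)
  haveI hT2 : T2Space (Set.range ((simplexT k).restrict p)) :=
    hp.toHomeomorph.t2Space
  have hpcOn : ContinuousOn p (simplexT k) :=
    continuousOn_iff_continuous_restrict.mpr hp.continuous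
  have hfc : ContinuousOn (fun x => (p (tp x), g x)) (simplexT (k + K)) :=
    (hpcOn.comp htpc.continuousOn Htp).prodMk Hgc
  have hrc : Continuous ((simplexT (k + K)).restrict fun x => (p (tp x), g x)) :=
    continuousOn_iff_continuous_restrict.mp hfc
  set F : simplexT (k + K) → (Set.range ((simplexT k).restrict p)) × (Fin m → ℝ) :=
    fun x => (⟨p (tp x.1), ⟨⟨tp x.1, Htp x.1 x.2⟩, rfl⟩⟩, g x.1) with hF
  have hFc : Continuous F := by
    refine Continuous.prodMk ?_ (continuous_snd.comp hrc)
    exact (continuous_fst.comp hrc).subtype_mk _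
  have hFinj : Function.Injective F := by
    intro a b hab
    apply Subtype.ext
    apply Hinj a.2 b.2
    have h1 : p (tp a.1) = p (tp b.1) := congrArg (fun z => (Subtype.val z.1 : Z)) hab
    have h2 : g a.1 = g b.1 := congrArg Prod.snd hab
    exact Prod.ext h1 h2
  have hFemb : IsEmbedding F := (hFc.isClosedEmbedding hFinj).isEmbedding
  have Hemb : IsEmbedding ((simplexT (k + K)).restrict fun x => (p (tp x), g x)) := by
    have hcomp : (simplexT (k + K)).restrict (fun x => (p (tp x), g x)) =
        (Prod.map (Subtype.val : (Set.range ((simplexT k).restrict p)) → Z) id) ∘ F := rfl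
    rw [hcomp]
    exact (IsEmbedding.subtypeVal.prodMap IsEmbedding.id).comp hFemb
  -- conclusion
  refine ⟨fun x => (p (tp x), g x), Hemb, fun x hx => HY x hx, fun t ht => ⟨?_, ?_⟩⟩
  · intro x hx hxs
    show p (tp x) = p t
    rw [show tp x = t from funext hxs]
  · have hset : {x | x ∈ simplexT (k + (K + 1) - 1) ∧
        ∀ j : Fin k, x (Fin.castLE (by omega) j) = t j} =
        {x ∈ simplexT (k + K) | tp x = t} := by
      ext x
      exact and_congr_right fun _ =>
        ⟨fun h => funext h, fun h j => congrFun h j⟩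
    rw [hset]
    exact Himg t ht
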